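/- arXiv:1910.12950 — 2 statements merged into one kernel-verified Lean document; each statement's English description precedes it below -/
import Mathlib

section
/- In the graded tensor product A_q ⊗ A_q, the elements Ξ = x⊗ξ + ξ⊗x and Θ = x⊗θ + θ⊗x satisfy Ξ·Θ = Θ·Ξ. -/
/-!
STATEMENT 4: In the graded tensor product `A_q ⊗ A_q`, the elements `Ξ = x⊗ξ + ξ⊗x` and
`Θ = x⊗θ + θ⊗x` satisfy `Ξ·Θ = Θ·Ξ`.
Here `A_q ⊗ A_q` carries the graded multiplication
`(a⊗b)(c⊗d) = (−1)^{⟨deg b, deg c⟩} ac ⊗ bd` on homogeneous elements.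
-/
open scoped TensorProduct

namespace DGQS

/-- The standard scalar product `⟨(a,b),(a',b')⟩ = aa' + bb'` on `ℤ₂ × ℤ₂`. -/
def pair2 (γ δ : ZMod 2 × ZMod 2) : ZMod 2 := γ.1 * δ.1 + γ.2 * δ.2

/-- The sign `(−1)^{⟨γ,δ⟩}`. -/
noncomputable def gsign (γ δ : ZMod 2 × ZMod 2) : ℂ := (-1 : ℂ) ^ (pair2 γ δ).val

/-- The defining relations of the double-graded quantum superplane, imposed on the free
algebra on four generators `x = ι 0`, `ξ = ι 1`, `θ = ι 2`, `z = ι 3`: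
`xξ = q ξx`, `xθ = q θx`, `xz = zx`, `ξ² = 0`, `θ² = 0`, `ξθ = θξ`,
`ξz = −q⁻¹ zξ`, `θz = −q⁻¹ zθ`. -/
inductive Rel (q : ℂ) : FreeAlgebra ℂ (Fin 4) → FreeAlgebra ℂ (Fin 4) → Prop
  | x_xi : Rel q (FreeAlgebra.ι ℂ (0 : Fin 4) * FreeAlgebra.ι ℂ (1 : Fin 4))
      (q • (FreeAlgebra.ι ℂ (1 : Fin 4) * FreeAlgebra.ι ℂ (0 : Fin 4)))
  | x_th : Rel q (FreeAlgebra.ι ℂ (0 : Fin 4) * FreeAlgebra.ι ℂ (2 : Fin 4))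
      (q • (FreeAlgebra.ι ℂ (2 : Fin 4) * FreeAlgebra.ι ℂ (0 : Fin 4)))
  | x_z : Rel q (FreeAlgebra.ι ℂ (0 : Fin 4) * FreeAlgebra.ι ℂ (3 : Fin 4))
      (FreeAlgebra.ι ℂ (3 : Fin 4) * FreeAlgebra.ι ℂ (0 : Fin 4))
  | xi_sq : Rel q (FreeAlgebra.ι ℂ (1 : Fin 4) * FreeAlgebra.ι ℂ (1 : Fin 4)) 0
  | th_sq : Rel q (FreeAlgebra.ι ℂ (2 : Fin 4) * FreeAlgebra.ι ℂ (2 : Fin 4)) 0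
  | xi_th : Rel q (FreeAlgebra.ι ℂ (1 : Fin 4) * FreeAlgebra.ι ℂ (2 : Fin 4))
      (FreeAlgebra.ι ℂ (2 : Fin 4) * FreeAlgebra.ι ℂ (1 : Fin 4))
  | xi_z : Rel q (FreeAlgebra.ι ℂ (1 : Fin 4) * FreeAlgebra.ι ℂ (3 : Fin 4))
      ((-q⁻¹) • (FreeAlgebra.ι ℂ (3 : Fin 4) * FreeAlgebra.ι ℂ (1 : Fin 4)))
  | th_z : Rel q (FreeAlgebra.ι ℂ (2 : Fin 4) * FreeAlgebra.ι ℂ (3 : Fin 4))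
      ((-q⁻¹) • (FreeAlgebra.ι ℂ (3 : Fin 4) * FreeAlgebra.ι ℂ (2 : Fin 4)))

/-- The algebra of polynomials on the double-graded quantum superplane `ℝ_q(1|𝟏)`. -/
abbrev Aq (q : ℂ) : Type := RingQuot (Rel q)

/-- The generators of `A_q`. -/
noncomputable def gen (q : ℂ) (i : Fin 4) : Aq q :=
  RingQuot.mkAlgHom ℂ (Rel q) (FreeAlgebra.ι ℂ i)

/-- The generator `x`, of degree `(0,0)`. -/
noncomputable def X (q : ℂ) : Aq q := gen q 0
/-- The generator `ξ`, of degree `(0,1)`. -/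
noncomputable def Xi (q : ℂ) : Aq q := gen q 1
/-- The generator `θ`, of degree `(1,0)`. -/
noncomputable def Th (q : ℂ) : Aq q := gen q 2
/-- The generator `z`, of degree `(1,1)`. -/
noncomputable def Zg (q : ℂ) : Aq q := gen q 3

/-- The `ℤ₂ × ℤ₂`-degrees of the generators. -/
def dg : Fin 4 → ZMod 2 × ZMod 2 := ![(0, 0), (0, 1), (1, 0), (1, 1)]

/-- The homogeneous component of degree `γ` of `A_q`: the span of the images of the
words in the generators of total degree `γ`. -/
noncomputable def grading (q : ℂ) (γ : ZMod 2 × ZMod 2) : Submodule ℂ (Aq q) :=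
  Submodule.span ℂ
    { a | ∃ w : List (Fin 4), (w.map dg).sum = γ ∧ a = (w.map (gen q)).prod }

end DGQS


namespace DGQS

lemma gen_mem (q : ℂ) (i : Fin 4) : gen q i ∈ grading q (dg i) :=
  Submodule.subset_span ⟨[i], by simp, by simp⟩

lemma X_mem (q : ℂ) : X q ∈ grading q (0, 0) := gen_mem q 0
lemma Xi_mem (q : ℂ) : Xi q ∈ grading q (0, 1) := gen_mem q 1
lemma Th_mem (q : ℂ) : Th q ∈ grading q (1, 0) := gen_mem q 2

lemma rel_eq {q : ℂ} {a b : FreeAlgebra ℂ (Fin 4)} (h : Rel q a b) :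
    RingQuot.mkAlgHom ℂ (Rel q) a = RingQuot.mkAlgHom ℂ (Rel q) b :=
  RingQuot.mkAlgHom_rel ℂ h

lemma x_xi (q : ℂ) : X q * Xi q = q • (Xi q * X q) := by
  have := rel_eq (Rel.x_xi (q := q))
  simpa [X, Xi, gen, map_mul, map_smul] using this

lemma x_th (q : ℂ) : X q * Th q = q • (Th q * X q) := by
  have := rel_eq (Rel.x_th (q := q))
  simpa [X, Th, gen, map_mul, map_smul] using this

lemma xi_th (q : ℂ) : Xi q * Th q = Th q * Xi q := by
  have := rel_eq (Rel.xi_th (q := q))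
  simpa [Xi, Th, gen, map_mul] using this

end DGQS

open DGQS in
theorem statement4 (q : ℂ) (hq : q ≠ 0) (hqroot : ∀ n : ℕ, 0 < n → q ^ n ≠ 1)
    (gmul : (Aq q ⊗[ℂ] Aq q) →ₗ[ℂ] (Aq q ⊗[ℂ] Aq q) →ₗ[ℂ] (Aq q ⊗[ℂ] Aq q))
    (hgmul : ∀ {γ δ : ZMod 2 × ZMod 2} {b c : Aq q},
      b ∈ grading q γ → c ∈ grading q δ → ∀ a d : Aq q,
        gmul (a ⊗ₜ[ℂ] b) (c ⊗ₜ[ℂ] d) = gsign γ δ • ((a * c) ⊗ₜ[ℂ] (b * d))) :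
    gmul (X q ⊗ₜ[ℂ] Xi q + Xi q ⊗ₜ[ℂ] X q) (X q ⊗ₜ[ℂ] Th q + Th q ⊗ₜ[ℂ] X q)
      = gmul (X q ⊗ₜ[ℂ] Th q + Th q ⊗ₜ[ℂ] X q) (X q ⊗ₜ[ℂ] Xi q + Xi q ⊗ₜ[ℂ] X q) := by
  have hXΞ := x_xi q
  have hXΘ := x_th q
  have hΞΘ := xi_th q
  have hsign : ∀ γ δ : ZMod 2 × ZMod 2, pair2 γ δ = 0 → gsign γ δ = 1 := by
    intro γ δ h; simp [gsign, h]
  have e1 := hgmul (Xi_mem q) (X_mem q) (X q) (Th q)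
  have e2 := hgmul (Xi_mem q) (Th_mem q) (X q) (X q)
  have e3 := hgmul (X_mem q) (X_mem q) (Xi q) (Th q)
  have e4 := hgmul (X_mem q) (Th_mem q) (Xi q) (X q)
  have f1 := hgmul (Th_mem q) (X_mem q) (X q) (Xi q)
  have f2 := hgmul (Th_mem q) (Xi_mem q) (X q) (X q)
  have f3 := hgmul (X_mem q) (X_mem q) (Th q) (Xi q)
  have f4 := hgmul (X_mem q) (Xi_mem q) (Th q) (X q)
  have hΞX : Xi q * X q = q⁻¹ • (X q * Xi q) := by
    rw [hXΞ, smul_smul, inv_mul_cancel₀ hq, one_smul]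
  have hΘX : Th q * X q = q⁻¹ • (X q * Th q) := by
    rw [hXΘ, smul_smul, inv_mul_cancel₀ hq, one_smul]
  have t1 : (X q * Th q) ⊗ₜ[ℂ] (Xi q * X q) = (Th q * X q) ⊗ₜ[ℂ] (X q * Xi q) := by
    rw [hΘX, hΞX]; simp [TensorProduct.smul_tmul', TensorProduct.tmul_smul]
  have t2 : (Xi q * X q) ⊗ₜ[ℂ] (X q * Th q) = (X q * Xi q) ⊗ₜ[ℂ] (Th q * X q) := by
    rw [hΞX, hΘX]; simp [TensorProduct.smul_tmul', TensorProduct.tmul_smul]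
  simp only [map_add, LinearMap.add_apply, e1, e2, e3, e4, f1, f2, f3, f4]
  norm_num [gsign, pair2]
  rw [hΞΘ, t1, t2]
  abel
end

section
/- In the extended double-graded quantum superplane algebra Ā_q, the graded antihomomorphism S with S(x) = x⁻¹, S(x⁻¹) = x, S(ξ) = −x⁻¹ξx⁻¹, S(θ) = −x⁻¹θx⁻¹, S(z) = −x⁻¹zx⁻¹ is involutive: S²(x) = x, S²(x⁻¹) = x⁻¹, S²(ξ) = ξ, S²(θ) = θ and S²(z) = z; hence S² = Id on Ā_q. -/
/-!
STATEMENT 9: In the extended double-graded quantum superplane algebra `Ā_q`, the graded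
antihomomorphism `S` (i.e. the `ℂ`-linear map with `S(1) = 1` and
`S(ab) = (−1)^{⟨deg a, deg b⟩} S(b)S(a)` on homogeneous elements) with `S(x) = x⁻¹`,
`S(x⁻¹) = x`, `S(ξ) = −x⁻¹ξx⁻¹`, `S(θ) = −x⁻¹θx⁻¹`, `S(z) = −x⁻¹zx⁻¹` is involutive:
`S²(x) = x`, `S²(x⁻¹) = x⁻¹`, `S²(ξ) = ξ`, `S²(θ) = θ` and `S²(z) = z`; hence
`S² = Id` on `Ā_q`.
-/
open scoped TensorProduct

namespace DGQSext

/-- The standard scalar product `⟨(a,b),(a',b')⟩ = aa' + bb'` on `ℤ₂ × ℤ₂`. -/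
def pair2 (γ δ : ZMod 2 × ZMod 2) : ZMod 2 := γ.1 * δ.1 + γ.2 * δ.2

/-- The sign `(−1)^{⟨γ,δ⟩}`. -/
noncomputable def gsign (γ δ : ZMod 2 × ZMod 2) : ℂ := (-1 : ℂ) ^ (pair2 γ δ).val

/-- The defining relations of the extended double-graded quantum superplane, imposed on the
free algebra on five generators `x = ι 0`, `x⁻¹ = ι 1`, `ξ = ι 2`, `θ = ι 3`, `z = ι 4`:
`xξ = q ξx`, `xθ = q θx`, `xz = zx`, `ξ² = 0`, `θ² = 0`, `ξθ = θξ`, `ξz = −q⁻¹ zξ`,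
`θz = −q⁻¹ zθ`, `xx⁻¹ = x⁻¹x = 1`, `x⁻¹ξ = q⁻¹ ξx⁻¹`, `x⁻¹θ = q⁻¹ θx⁻¹`, `x⁻¹z = zx⁻¹`. -/
inductive Rel (q : ℂ) : FreeAlgebra ℂ (Fin 5) → FreeAlgebra ℂ (Fin 5) → Prop
  | x_xi : Rel q (FreeAlgebra.ι ℂ (0 : Fin 5) * FreeAlgebra.ι ℂ (2 : Fin 5))
      (q • (FreeAlgebra.ι ℂ (2 : Fin 5) * FreeAlgebra.ι ℂ (0 : Fin 5)))
  | x_th : Rel q (FreeAlgebra.ι ℂ (0 : Fin 5) * FreeAlgebra.ι ℂ (3 : Fin 5))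
      (q • (FreeAlgebra.ι ℂ (3 : Fin 5) * FreeAlgebra.ι ℂ (0 : Fin 5)))
  | x_z : Rel q (FreeAlgebra.ι ℂ (0 : Fin 5) * FreeAlgebra.ι ℂ (4 : Fin 5))
      (FreeAlgebra.ι ℂ (4 : Fin 5) * FreeAlgebra.ι ℂ (0 : Fin 5))
  | xi_sq : Rel q (FreeAlgebra.ι ℂ (2 : Fin 5) * FreeAlgebra.ι ℂ (2 : Fin 5)) 0
  | th_sq : Rel q (FreeAlgebra.ι ℂ (3 : Fin 5) * FreeAlgebra.ι ℂ (3 : Fin 5)) 0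
  | xi_th : Rel q (FreeAlgebra.ι ℂ (2 : Fin 5) * FreeAlgebra.ι ℂ (3 : Fin 5))
      (FreeAlgebra.ι ℂ (3 : Fin 5) * FreeAlgebra.ι ℂ (2 : Fin 5))
  | xi_z : Rel q (FreeAlgebra.ι ℂ (2 : Fin 5) * FreeAlgebra.ι ℂ (4 : Fin 5))
      ((-q⁻¹) • (FreeAlgebra.ι ℂ (4 : Fin 5) * FreeAlgebra.ι ℂ (2 : Fin 5)))
  | th_z : Rel q (FreeAlgebra.ι ℂ (3 : Fin 5) * FreeAlgebra.ι ℂ (4 : Fin 5))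
      ((-q⁻¹) • (FreeAlgebra.ι ℂ (4 : Fin 5) * FreeAlgebra.ι ℂ (3 : Fin 5)))
  | x_xinv : Rel q (FreeAlgebra.ι ℂ (0 : Fin 5) * FreeAlgebra.ι ℂ (1 : Fin 5)) 1
  | xinv_x : Rel q (FreeAlgebra.ι ℂ (1 : Fin 5) * FreeAlgebra.ι ℂ (0 : Fin 5)) 1
  | xinv_xi : Rel q (FreeAlgebra.ι ℂ (1 : Fin 5) * FreeAlgebra.ι ℂ (2 : Fin 5))
      (q⁻¹ • (FreeAlgebra.ι ℂ (2 : Fin 5) * FreeAlgebra.ι ℂ (1 : Fin 5)))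
  | xinv_th : Rel q (FreeAlgebra.ι ℂ (1 : Fin 5) * FreeAlgebra.ι ℂ (3 : Fin 5))
      (q⁻¹ • (FreeAlgebra.ι ℂ (3 : Fin 5) * FreeAlgebra.ι ℂ (1 : Fin 5)))
  | xinv_z : Rel q (FreeAlgebra.ι ℂ (1 : Fin 5) * FreeAlgebra.ι ℂ (4 : Fin 5))
      (FreeAlgebra.ι ℂ (4 : Fin 5) * FreeAlgebra.ι ℂ (1 : Fin 5))

/-- The algebra of polynomials on the extended double-graded quantum superplane. -/
abbrev Abar (q : ℂ) : Type := RingQuot (Rel q)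

/-- The generators of `Ā_q`. -/
noncomputable def gen (q : ℂ) (i : Fin 5) : Abar q :=
  RingQuot.mkAlgHom ℂ (Rel q) (FreeAlgebra.ι ℂ i)

/-- The generator `x`, of degree `(0,0)`. -/
noncomputable def X (q : ℂ) : Abar q := gen q 0
/-- The generator `x⁻¹`, of degree `(0,0)`. -/
noncomputable def Xinv (q : ℂ) : Abar q := gen q 1
/-- The generator `ξ`, of degree `(0,1)`. -/
noncomputable def Xi (q : ℂ) : Abar q := gen q 2
/-- The generator `θ`, of degree `(1,0)`. -/
noncomputable def Th (q : ℂ) : Abar q := gen q 3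
/-- The generator `z`, of degree `(1,1)`. -/
noncomputable def Zg (q : ℂ) : Abar q := gen q 4

/-- The `ℤ₂ × ℤ₂`-degrees of the generators. -/
def dg : Fin 5 → ZMod 2 × ZMod 2 := ![(0, 0), (0, 0), (0, 1), (1, 0), (1, 1)]

/-- The homogeneous component of degree `γ` of `Ā_q`: the span of the images of the
words in the generators of total degree `γ`. -/
noncomputable def grading (q : ℂ) (γ : ZMod 2 × ZMod 2) : Submodule ℂ (Abar q) :=
  Submodule.span ℂ
    { a | ∃ w : List (Fin 5), (w.map dg).sum = γ ∧ a = (w.map (gen q)).prod }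

end DGQSext


namespace DGQSext

theorem word_mem' (q : ℂ) (w : List (Fin 5)) :
    (w.map (gen q)).prod ∈ grading q ((w.map dg).sum) :=
  Submodule.subset_span ⟨w, rfl, rfl⟩

theorem gen_mem' (q : ℂ) (i : Fin 5) : gen q i ∈ grading q (dg i) := by
  have h := word_mem' q [i]
  simpa using h

theorem grading_mul' (q : ℂ) {γ δ : ZMod 2 × ZMod 2} {a b : Abar q}
    (ha : a ∈ grading q γ) (hb : b ∈ grading q δ) : a * b ∈ grading q (γ + δ) := by
  have h : grading q γ * grading q δ ≤ grading q (γ + δ) := by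
    rw [grading, grading, Submodule.span_mul_span]
    apply Submodule.span_le.2
    rintro x ⟨a, ⟨w1, hw1, rfl⟩, b, ⟨w2, hw2, rfl⟩, rfl⟩
    exact Submodule.subset_span ⟨w1 ++ w2, by simp [hw1, hw2], by simp⟩
  exact h (Submodule.mul_mem_mul ha hb)

theorem gsign_zero_right (γ : ZMod 2 × ZMod 2) :
    gsign γ ((0, 0) : ZMod 2 × ZMod 2) = 1 := by
  simp [gsign, pair2]

theorem gsign_zero_left (γ : ZMod 2 × ZMod 2) :
    gsign ((0, 0) : ZMod 2 × ZMod 2) γ = 1 := by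
  simp [gsign, pair2]

theorem gsign_symm_mul (γ δ : ZMod 2 × ZMod 2) : gsign γ δ * gsign δ γ = 1 := by
  have h : pair2 δ γ = pair2 γ δ := by unfold pair2; ring
  rw [gsign, gsign, h, ← mul_pow]
  norm_num

theorem xinv_mul_x (q : ℂ) : Xinv q * X q = 1 := by
  have h := RingQuot.mkAlgHom_rel ℂ (Rel.xinv_x (q := q))
  simpa [Xinv, X, gen, map_mul] using h

theorem x_mul_xinv (q : ℂ) : X q * Xinv q = 1 := by
  have h := RingQuot.mkAlgHom_rel ℂ (Rel.x_xinv (q := q))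
  simpa [Xinv, X, gen, map_mul] using h

end DGQSext

open DGQSext in
theorem statement9 (q : ℂ) (hq : q ≠ 0) (hqroot : ∀ n : ℕ, 0 < n → q ^ n ≠ 1)
    (S : Abar q →ₗ[ℂ] Abar q)
    (hSone : S 1 = 1)
    (hSanti : ∀ {γ δ : ZMod 2 × ZMod 2} {a b : Abar q},
      a ∈ grading q γ → b ∈ grading q δ → S (a * b) = gsign γ δ • (S b * S a))
    (hSx : S (X q) = Xinv q)
    (hSxinv : S (Xinv q) = X q)
    (hSξ : S (Xi q) = -(Xinv q * Xi q * Xinv q))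
    (hSθ : S (Th q) = -(Xinv q * Th q * Xinv q))
    (hSz : S (Zg q) = -(Xinv q * Zg q * Xinv q)) :
    S (S (X q)) = X q ∧ S (S (Xinv q)) = Xinv q ∧ S (S (Xi q)) = Xi q ∧
    S (S (Th q)) = Th q ∧ S (S (Zg q)) = Zg q ∧
    ∀ a : Abar q, S (S a) = a := by

  -- basic memberships
  have hXinv_mem : Xinv q ∈ grading q ((0,0) : ZMod 2 × ZMod 2) := by
    have h := gen_mem' q 1
    have e : dg (1 : Fin 5) = ((0,0) : ZMod 2 × ZMod 2) := by decide
    rwa [e] at h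
  have hX_mem : X q ∈ grading q ((0,0) : ZMod 2 × ZMod 2) := by
    have h := gen_mem' q 0
    have e : dg (0 : Fin 5) = ((0,0) : ZMod 2 × ZMod 2) := by decide
    rwa [e] at h
  have hx1 := x_mul_xinv q
  have hx2 := xinv_mul_x q
  -- key computation for the odd generators
  have key : ∀ (γ : ZMod 2 × ZMod 2) (g : Abar q), g ∈ grading q γ →
      S g = -(Xinv q * g * Xinv q) → S (S g) = g := by
    intro γ g hg hSg
    have h1 : S (Xinv q * g) = -(Xinv q * g) := by
      rw [hSanti hXinv_mem hg, hSg, hSxinv, gsign_zero_left, one_smul]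
      rw [neg_mul (Xinv q * g * Xinv q) (X q), mul_assoc (Xinv q * g), hx2, mul_one]
    have h2 : S (Xinv q * g * Xinv q) = -g := by
      rw [hSanti (grading_mul' q hXinv_mem hg) hXinv_mem, gsign_zero_right, one_smul,
        h1, hSxinv]
      rw [mul_neg (X q) (Xinv q * g), ← mul_assoc, hx1, one_mul]
    rw [hSg, map_neg, h2, neg_neg]
  -- generator-level statements
  have hXi_mem : Xi q ∈ grading q ((0,1) : ZMod 2 × ZMod 2) := by
    have h := gen_mem' q 2
    have e : dg (2 : Fin 5) = ((0,1) : ZMod 2 × ZMod 2) := by decide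
    rwa [e] at h
  have hTh_mem : Th q ∈ grading q ((1,0) : ZMod 2 × ZMod 2) := by
    have h := gen_mem' q 3
    have e : dg (3 : Fin 5) = ((1,0) : ZMod 2 × ZMod 2) := by decide
    rwa [e] at h
  have hZg_mem : Zg q ∈ grading q ((1,1) : ZMod 2 × ZMod 2) := by
    have h := gen_mem' q 4
    have e : dg (4 : Fin 5) = ((1,1) : ZMod 2 × ZMod 2) := by decide
    rwa [e] at h
  have hssX : S (S (X q)) = X q := by rw [hSx, hSxinv]
  have hssXinv : S (S (Xinv q)) = Xinv q := by rw [hSxinv, hSx]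
  have hssXi : S (S (Xi q)) = Xi q := key _ _ hXi_mem hSξ
  have hssTh : S (S (Th q)) = Th q := key _ _ hTh_mem hSθ
  have hssZg : S (S (Zg q)) = Zg q := key _ _ hZg_mem hSz
  have Ssq_gen : ∀ i : Fin 5, S (S (gen q i)) = gen q i := by
    intro i
    fin_cases i
    · exact hssX
    · exact hssXinv
    · exact hssXi
    · exact hssTh
    · exact hssZg
  -- S maps generators to homogeneous elements of the same degree
  have Sgen_mem : ∀ i : Fin 5, S (gen q i) ∈ grading q (dg i) := by
    intro i
    fin_cases i
    · show S (X q) ∈ grading q (dg (0 : Fin 5))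
      have e : dg (0 : Fin 5) = ((0,0) : ZMod 2 × ZMod 2) := by decide
      rw [hSx, e]; exact hXinv_mem
    · show S (Xinv q) ∈ grading q (dg (1 : Fin 5))
      have e : dg (1 : Fin 5) = ((0,0) : ZMod 2 × ZMod 2) := by decide
      rw [hSxinv, e]; exact hX_mem
    · show S (Xi q) ∈ grading q (dg (2 : Fin 5))
      have e : dg (2 : Fin 5) = ((0,1) : ZMod 2 × ZMod 2) := by decide
      rw [hSξ, e]
      have h := grading_mul' q (grading_mul' q hXinv_mem hXi_mem) hXinv_mem
      have e2 : (((0,0) : ZMod 2 × ZMod 2) + (0,1)) + (0,0) = ((0,1) : ZMod 2 × ZMod 2) := by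
        decide
      rw [e2] at h
      exact Submodule.neg_mem _ h
    · show S (Th q) ∈ grading q (dg (3 : Fin 5))
      have e : dg (3 : Fin 5) = ((1,0) : ZMod 2 × ZMod 2) := by decide
      rw [hSθ, e]
      have h := grading_mul' q (grading_mul' q hXinv_mem hTh_mem) hXinv_mem
      have e2 : (((0,0) : ZMod 2 × ZMod 2) + (1,0)) + (0,0) = ((1,0) : ZMod 2 × ZMod 2) := by
        decide
      rw [e2] at h
      exact Submodule.neg_mem _ h
    · show S (Zg q) ∈ grading q (dg (4 : Fin 5))
      have e : dg (4 : Fin 5) = ((1,1) : ZMod 2 × ZMod 2) := by decide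
      rw [hSz, e]
      have h := grading_mul' q (grading_mul' q hXinv_mem hZg_mem) hXinv_mem
      have e2 : (((0,0) : ZMod 2 × ZMod 2) + (1,1)) + (0,0) = ((1,1) : ZMod 2 × ZMod 2) := by
        decide
      rw [e2] at h
      exact Submodule.neg_mem _ h
  -- main induction on words
  have main : ∀ w : List (Fin 5),
      S ((w.map (gen q)).prod) ∈ grading q ((w.map dg).sum) ∧
      S (S ((w.map (gen q)).prod)) = (w.map (gen q)).prod := by
    intro w
    induction w with
    | nil =>
      refine ⟨?_, by simpa [hSone] using hSone⟩
      simp only [List.map_nil, List.prod_nil, List.sum_nil, hSone]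
      exact Submodule.subset_span ⟨[], rfl, by simp⟩
    | cons i t ih =>
      obtain ⟨ihmem, iheq⟩ := ih
      simp only [List.map_cons, List.prod_cons, List.sum_cons]
      have h1 : S (gen q i * (t.map (gen q)).prod)
          = gsign (dg i) ((t.map dg).sum) • (S ((t.map (gen q)).prod) * S (gen q i)) :=
        hSanti (gen_mem' q i) (word_mem' q t)
      constructor
      · rw [h1]
        refine Submodule.smul_mem _ _ ?_
        have h := grading_mul' q ihmem (Sgen_mem i)
        rwa [add_comm] at h
      · rw [h1, map_smul, hSanti ihmem (Sgen_mem i), iheq, Ssq_gen i,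
          smul_smul, gsign_symm_mul, one_smul]
  refine ⟨hssX, hssXinv, hssXi, hssTh, hssZg, ?_⟩
  -- every element lies in the span of word products
  have hset : Set.range (gen q) =
      (RingQuot.mkAlgHom ℂ (Rel q)) '' Set.range (FreeAlgebra.ι ℂ) := by
    rw [← Set.range_comp]; rfl
  have hadj : Algebra.adjoin ℂ (Set.range (gen q)) = ⊤ := by
    rw [hset, ← AlgHom.map_adjoin, FreeAlgebra.adjoin_range_ι, Algebra.map_top]
    exact (AlgHom.range_eq_top _).2 (RingQuot.mkAlgHom_surjective ℂ (Rel q))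
  have hlist : ∀ l : List (Abar q), (∀ y ∈ l, y ∈ Set.range (gen q)) →
      ∃ w : List (Fin 5), l.prod = (w.map (gen q)).prod := by
    intro l
    induction l with
    | nil => exact fun _ => ⟨[], by simp⟩
    | cons a t ih =>
      intro h
      obtain ⟨i, hi⟩ := h a List.mem_cons_self
      obtain ⟨w, hw⟩ := ih (fun y hy => h y (List.mem_cons_of_mem _ hy))
      exact ⟨i :: w, by simp [← hi, hw]⟩
  intro a
  have ha : a ∈ Submodule.span ℂ ((Submonoid.closure (Set.range (gen q)) : Submonoid (Abar q)) :
      Set (Abar q)) := by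
    have : a ∈ Subalgebra.toSubmodule (Algebra.adjoin ℂ (Set.range (gen q))) := by
      rw [hadj]; trivial
    rwa [Algebra.adjoin_eq_span] at this
  refine Submodule.span_induction ?_ ?_ ?_ ?_ ha
  · intro x hx
    obtain ⟨l, hl, rfl⟩ := Submonoid.exists_list_of_mem_closure hx
    obtain ⟨w, hw⟩ := hlist l hl
    rw [hw]
    exact (main w).2
  · simp
  · intro x y _ _ hx hy
    rw [map_add, map_add, hx, hy]
  · intro c x _ hx
    rw [map_smul, map_smul, hx]
end
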